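/- (Specker) For every natural number m, ω² → (ω², m)²: every colouring f : [ω²]² → {0,1} either admits a subset of order type ω² all of whose pairs are coloured 0, or an m-element set all of whose pairs are coloured 1. -/

import Mathlib

section SpeckerAux

open Ordinal

/-! ### Ordinal encoding of pairs -/

noncomputable def specE (a b : ℕ) : Ordinal := omega0 * a + b

lemma specE_lt (a b : ℕ) : specE a b < omega0 * omega0 := by
  calc omega0 * a + (b:Ordinal) < omega0 * a + omega0 := add_lt_add_right (nat_lt_omega0 b) _
    _ = omega0 * (a+1) := by rw [mul_add_one]
    _ ≤ omega0 * omega0 := mul_le_mul_right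
        ((nat_lt_omega0 (a+1)).le.trans_eq (by norm_cast)) _

lemma specE_lt_left {a a' : ℕ} (h : a < a') (b b' : ℕ) : specE a b < specE a' b' := by
  calc specE a b < omega0 * (a+1) := by
        unfold specE; rw [mul_add_one]; exact add_lt_add_right (nat_lt_omega0 b) _
    _ ≤ omega0 * a' := by
        apply mul_le_mul_right
        have : ((a:Ordinal)+1) ≤ (a':ℕ) := by exact_mod_cast Nat.cast_le.mpr h
        exact this
    _ ≤ specE a' b' := le_self_add

lemma specE_lt_right (a : ℕ) {b b' : ℕ} (h : b < b') : specE a b < specE a b' :=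
  add_lt_add_right (by exact_mod_cast h) _

lemma specE_lex {a b a' b' : ℕ} (h : specE a b < specE a' b') :
    a < a' ∨ (a = a' ∧ b < b') := by
  rcases lt_trichotomy a a' with h1 | h1 | h1
  · exact Or.inl h1
  · subst h1
    refine Or.inr ⟨rfl, ?_⟩
    have := lt_of_add_lt_add_left h
    exact_mod_cast this
  · exact absurd (specE_lt_left h1 b' b) (not_lt.mpr h.le)

lemma specE_decomp (x : Ordinal) (h : x < omega0 * omega0) : ∃ a b : ℕ, x = specE a b := by
  obtain ⟨a, ha⟩ := lt_omega0.mp ((div_lt omega0_ne_zero).mpr h)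
  obtain ⟨b, hb⟩ := lt_omega0.mp (mod_lt x omega0_ne_zero)
  exact ⟨a, b, by rw [specE, ← ha, ← hb, div_add_mod]⟩

lemma omega0_sq : Ordinal.omega0 ^ (2:Ordinal) = omega0 * omega0 := by
  rw [show (2:Ordinal) = 1+1 by norm_num, opow_add, opow_one]

end SpeckerAux

/-! ### Infinite Ramsey theorem for tuples -/

lemma specker_strictMono_cons {k : ℕ} {a : ℕ} {w : Fin k → ℕ} (hw : StrictMono w)
    (ha : ∀ i, a < w i) : StrictMono (Fin.cons a w) := by
  intro i j hij
  induction j using Fin.cases with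
  | zero => exact absurd hij (Fin.not_lt_zero i)
  | succ j =>
    induction i using Fin.cases with
    | zero => simpa using ha j
    | succ i =>
      simp only [Fin.cons_succ]
      exact hw (Fin.succ_lt_succ_iff.mp hij)

theorem specker_ramsey {κ : Type} [Finite κ] :
    ∀ (k : ℕ) (c : (Fin k → ℕ) → κ) (S : Set ℕ), S.Infinite →
    ∃ M ⊆ S, M.Infinite ∧ ∃ d, ∀ v : Fin k → ℕ, StrictMono v → (∀ i, v i ∈ M) → c v = d := by
  intro k
  induction k with
  | zero =>
    intro c S hS
    exact ⟨S, subset_rfl, hS, c (fun i => i.elim0), fun v _ _ => by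
      congr 1; funext i; exact i.elim0⟩
  | succ k ih =>
    intro c S hS
    have key : ∀ T : Set ℕ, T.Infinite → ∃ (a : ℕ) (T' : Set ℕ) (d' : κ),
        a ∈ T ∧ T' ⊆ T ∧ T'.Infinite ∧ (∀ x ∈ T', a < x) ∧
        ∀ w : Fin k → ℕ, StrictMono w → (∀ i, w i ∈ T') → c (Fin.cons a w) = d' := by
      intro T hT
      obtain ⟨a, haT⟩ := hT.nonempty
      have hT0 : {x ∈ T | a < x}.Infinite := by
        have : {x ∈ T | a < x} = T \ Set.Iic a := by
          ext x; simp only [Set.mem_setOf_eq, Set.mem_diff, Set.mem_Iic, not_le]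
        rw [this]
        exact hT.diff (Set.finite_Iic a)
      obtain ⟨M, hMsub, hMinf, d', hd'⟩ := ih (fun w => c (Fin.cons a w)) {x ∈ T | a < x} hT0
      exact ⟨a, M, d', haT, fun x hx => (hMsub hx).1, hMinf,
        fun x hx => (hMsub hx).2, hd'⟩
    choose ka kT kd h1 h2 h3 h4 h5 using key
    let Tseq : ℕ → {T : Set ℕ // T.Infinite} := fun n =>
      Nat.rec ⟨S, hS⟩ (fun _ p => ⟨kT p.1 p.2, h3 p.1 p.2⟩) n
    set aseq : ℕ → ℕ := fun n => ka (Tseq n).1 (Tseq n).2 with haseq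
    set dseq : ℕ → κ := fun n => kd (Tseq n).1 (Tseq n).2 with hdseq
    have hTsucc : ∀ n, (Tseq (n+1)).1 ⊆ (Tseq n).1 := fun n => h2 _ _
    have hTsub : ∀ n, (Tseq n).1 ⊆ S := by
      intro n; induction n with
      | zero => exact subset_rfl
      | succ n ihn => exact (hTsucc n).trans ihn
    have hchain : ∀ n m, n ≤ m → (Tseq m).1 ⊆ (Tseq n).1 := by
      intro n m h
      induction m with
      | zero => cases Nat.le_zero.mp h; exact subset_rfl
      | succ m ihm =>
        rcases Nat.lt_or_ge n (m+1) with h' | h'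
        · exact (hTsucc m).trans (ihm (Nat.lt_succ_iff.mp h'))
        · cases le_antisymm h h'; exact subset_rfl
    have haMem : ∀ n, aseq n ∈ (Tseq n).1 := fun n => h1 _ _
    have haLt : ∀ n x, x ∈ (Tseq (n+1)).1 → aseq n < x := fun n => h4 _ _
    have haMono : StrictMono aseq :=
      strictMono_nat_of_lt_succ fun n => haLt n _ (haMem (n+1))
    have hhom : ∀ n (w : Fin k → ℕ), StrictMono w → (∀ i, w i ∈ (Tseq (n+1)).1) →
        c (Fin.cons (aseq n) w) = dseq n := fun n => h5 _ _
    obtain ⟨d, hd⟩ := Finite.exists_infinite_fiber dseq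
    have hdinf : (dseq ⁻¹' {d}).Infinite := Set.infinite_coe_iff.mp hd
    refine ⟨aseq '' (dseq ⁻¹' {d}), ?_, hdinf.image (haMono.injective.injOn), d, ?_⟩
    · rintro x ⟨n, _, rfl⟩; exact hTsub n (haMem n)
    · intro v hv hvM
      obtain ⟨n, hn, hv0⟩ := hvM 0
      have htail : ∀ i : Fin k, Fin.tail v i ∈ (Tseq (n+1)).1 := by
        intro i
        obtain ⟨m, _, hm⟩ := hvM i.succ
        have : aseq n < aseq m := by
          rw [hv0, hm]; exact hv (Fin.succ_pos i)
        have hnm : n + 1 ≤ m := haMono.lt_iff_lt.mp this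
        exact hchain (n+1) m hnm (by show v i.succ ∈ _; rw [← hm]; exact haMem m)
      have htm : StrictMono (Fin.tail v) := fun i j hij => hv (Fin.succ_lt_succ_iff.mpr hij)
      have := hhom n (Fin.tail v) htm htail
      rw [hv0, Fin.cons_self_tail] at this
      rw [this]
      exact hn

lemma specker_sm4 {w x y z : ℕ} (h1 : w < x) (h2 : x < y) (h3 : y < z) :
    StrictMono ![w, x, y, z] := by
  intro i j hij
  fin_cases i <;> fin_cases j <;> simp_all <;> omega

lemma specker_mem4 {M : Set ℕ} {w x y z : ℕ} (hw : w ∈ M) (hx : x ∈ M) (hy : y ∈ M)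
    (hz : z ∈ M) : ∀ i, ![w, x, y, z] i ∈ M := by
  intro i; fin_cases i <;> simpa

lemma specker_clique (m : ℕ) (f : Ordinal → Ordinal → Fin 2) (F : ℕ → Ordinal)
    (hlt : ∀ j, j < m → F j < Ordinal.omega0 ^ (2:Ordinal))
    (hmono : ∀ j j', j < j' → j' < m → F j < F j')
    (hcol : ∀ j j', j < j' → j' < m → f (F j) (F j') = 1) :
    ∃ C : Finset Ordinal, ↑C ⊆ Set.Iio (Ordinal.omega0 ^ (2 : Ordinal)) ∧ C.card = m ∧
        ∀ x ∈ C, ∀ y ∈ C, x < y → f x y = 1 := by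
  refine ⟨(Finset.range m).image F, ?_, ?_, ?_⟩
  · intro x hx
    simp only [Finset.coe_image, Finset.coe_range, Set.mem_image, Set.mem_Iio] at hx ⊢
    obtain ⟨j, hj, rfl⟩ := hx
    exact hlt j hj
  · rw [Finset.card_image_of_injOn, Finset.card_range]
    intro j hj j' hj' hne
    simp only [Finset.coe_range, Set.mem_Iio] at hj hj'
    rcases lt_trichotomy j j' with h | h | h
    · exact absurd hne (ne_of_lt (hmono j j' h hj'))
    · exact h
    · exact absurd hne.symm (ne_of_lt (hmono j' j h hj))
  · intro x hx y hy hxy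
    simp only [Finset.mem_image, Finset.mem_range] at hx hy
    obtain ⟨j, hj, rfl⟩ := hx
    obtain ⟨j', hj', rfl⟩ := hy
    rcases lt_trichotomy j j' with h | h | h
    · exact hcol j j' h hj'
    · subst h; exact absurd hxy (lt_irrefl _)
    · exact absurd (hmono j' j h hj) (not_lt.mpr hxy.le)

/-- `B` (a set of ordinals) has order type `β`. -/
def HasOtype (B : Set Ordinal) (β : Ordinal) : Prop := Nonempty (B ≃o Set.Iio β)

/-- Specker's theorem: for every `m`, `ω² → (ω², m)²`. -/
theorem specker (m : ℕ) (f : Ordinal → Ordinal → Fin 2) :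
    (∃ B ⊆ Set.Iio (Ordinal.omega0 ^ (2 : Ordinal)),
        HasOtype B (Ordinal.omega0 ^ (2 : Ordinal)) ∧
        ∀ x ∈ B, ∀ y ∈ B, x < y → f x y = 0) ∨
    (∃ C : Finset Ordinal, ↑C ⊆ Set.Iio (Ordinal.omega0 ^ (2 : Ordinal)) ∧ C.card = m ∧
        ∀ x ∈ C, ∀ y ∈ C, x < y → f x y = 1) := by
  classical
  let c : (Fin 4 → ℕ) → Fin 2 × Fin 2 × Fin 2 × Fin 2 × Fin 2 := fun v =>
    (f (specE (v 0) (v 1)) (specE (v 2) (v 3)),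
     f (specE (v 0) (v 2)) (specE (v 1) (v 3)),
     f (specE (v 0) (v 3)) (specE (v 1) (v 2)),
     f (specE (v 0) (v 1)) (specE (v 0) (v 2)),
     f (specE (v 0) (v 2)) (specE (v 1) (v 2)))
  obtain ⟨M, -, hMinf, ⟨d1, d2, d3, d4, d5⟩, hd⟩ :=
    specker_ramsey 4 c Set.univ Set.infinite_univ
  set u : ℕ → ℕ := Nat.nth (· ∈ M) with hu
  have hum : StrictMono u := Nat.nth_strictMono hMinf
  have humem : ∀ n, u n ∈ M := fun n => Nat.nth_mem_of_infinite hMinf n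
  have hom : ∀ w x y z : ℕ, w ∈ M → x ∈ M → y ∈ M → z ∈ M → w < x → x < y → y < z →
      f (specE w x) (specE y z) = d1 ∧ f (specE w y) (specE x z) = d2 ∧
      f (specE w z) (specE x y) = d3 ∧ f (specE w x) (specE w y) = d4 ∧
      f (specE w y) (specE x y) = d5 := by
    intro w x y z hw hx hy hz h1 h2 h3
    have := hd ![w, x, y, z] (specker_sm4 h1 h2 h3) (specker_mem4 hw hx hy hz)
    simpa [c, Prod.ext_iff] using this
  rcases eq_or_ne d1 1 with hd1 | hd1
  · refine Or.inr (specker_clique m f (fun j => specE (u (2*j)) (u (2*j+1))) ?_ ?_ ?_)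
    · intro j _; rw [omega0_sq]; exact specE_lt _ _
    · intro j j' h _; exact specE_lt_left (hum (by omega)) _ _
    · intro j j' h _
      exact ((hom (u (2*j)) (u (2*j+1)) (u (2*j')) (u (2*j'+1)) (humem _) (humem _)
        (humem _) (humem _) (hum (by omega)) (hum (by omega)) (hum (by omega))).1).trans hd1
  rcases eq_or_ne d2 1 with hd2 | hd2
  · refine Or.inr (specker_clique m f (fun j => specE (u j) (u (m+j))) ?_ ?_ ?_)
    · intro j _; rw [omega0_sq]; exact specE_lt _ _
    · intro j j' h _; exact specE_lt_left (hum h) _ _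
    · intro j j' h hj'
      exact ((hom (u j) (u j') (u (m+j)) (u (m+j')) (humem _) (humem _)
        (humem _) (humem _) (hum h) (hum (by omega)) (hum (by omega))).2.1).trans hd2
  rcases eq_or_ne d3 1 with hd3 | hd3
  · refine Or.inr (specker_clique m f (fun j => specE (u j) (u (2*m-1-j))) ?_ ?_ ?_)
    · intro j _; rw [omega0_sq]; exact specE_lt _ _
    · intro j j' h _; exact specE_lt_left (hum h) _ _
    · intro j j' h hj'
      exact ((hom (u j) (u j') (u (2*m-1-j')) (u (2*m-1-j)) (humem _) (humem _)
        (humem _) (humem _) (hum h) (hum (by omega)) (hum (by omega))).2.2.1).trans hd3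
  rcases eq_or_ne d4 1 with hd4 | hd4
  · refine Or.inr (specker_clique m f (fun j => specE (u 0) (u (j+1))) ?_ ?_ ?_)
    · intro j _; rw [omega0_sq]; exact specE_lt _ _
    · intro j j' h _; exact specE_lt_right _ (hum (by omega))
    · intro j j' h _
      exact ((hom (u 0) (u (j+1)) (u (j'+1)) (u (j'+2)) (humem _) (humem _)
        (humem _) (humem _) (hum (by omega)) (hum (by omega))
        (hum (by omega))).2.2.2.1).trans hd4
  rcases eq_or_ne d5 1 with hd5 | hd5
  · refine Or.inr (specker_clique m f (fun j => specE (u j) (u m)) ?_ ?_ ?_)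
    · intro j _; rw [omega0_sq]; exact specE_lt _ _
    · intro j j' h _; exact specE_lt_left (hum h) _ _
    · intro j j' h hj'
      exact ((hom (u j) (u j') (u m) (u (m+1)) (humem _) (humem _)
        (humem _) (humem _) (hum h) (hum hj') (hum (by omega))).2.2.2.2).trans hd5
  -- all colours are 0 : build the 0-homogeneous copy of ω²
  have d10 : d1 = 0 := by omega
  have d20 : d2 = 0 := by omega
  have d30 : d3 = 0 := by omega
  have d40 : d4 = 0 := by omega
  have d50 : d5 = 0 := by omega
  have hdec : ∀ x : Set.Iio (Ordinal.omega0 ^ (2:Ordinal)), ∃ a b : ℕ, x.1 = specE a b :=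
    fun x => specE_decomp x.1 (by rw [← omega0_sq]; exact x.2)
  choose p q hpq using hdec
  let g : Set.Iio (Ordinal.omega0 ^ (2:Ordinal)) → Ordinal := fun x =>
    specE (u (2 * p x)) (u (2 * p x + 2 * q x + 1))
  have hg : StrictMono g := by
    intro x y hxy
    have hxy' : specE (p x) (q x) < specE (p y) (q y) := by
      rw [← hpq x, ← hpq y]; exact hxy
    rcases specE_lex hxy' with h | ⟨h, h'⟩
    · exact specE_lt_left (hum (by omega)) _ _
    · show specE (u (2 * p x)) _ < specE (u (2 * p y)) _
      rw [h]
      exact specE_lt_right _ (hum (by omega))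
  refine Or.inl ⟨Set.range g, ?_, ⟨(hg.orderIso g).symm⟩, ?_⟩
  · rintro _ ⟨x, rfl⟩
    simp only [Set.mem_Iio]
    rw [omega0_sq]; exact specE_lt _ _
  · rintro _ ⟨x, rfl⟩ _ ⟨y, rfl⟩ hxy
    show f (specE (u (2*p x)) (u (2*p x+2*q x+1))) (specE (u (2*p y)) (u (2*p y+2*q y+1))) = 0
    have hxy' : specE (u (2*p x)) (u (2*p x+2*q x+1)) <
        specE (u (2*p y)) (u (2*p y+2*q y+1)) := hxy
    rcases specE_lex hxy' with h | ⟨h, h'⟩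
    · have hij : 2*p x < 2*p y := hum.lt_iff_lt.mp h
      rcases lt_trichotomy (2*p x+2*q x+1) (2*p y) with hc | hc | hc
      · exact ((hom (u (2*p x)) (u (2*p x+2*q x+1))) (u (2*p y)) (u (2*p y+2*q y+1))
          (humem _) (humem _) (humem _) (humem _)
          (hum (by omega)) (hum hc) (hum (by omega))).1.trans d10
      · exact absurd hc (by omega)
      · rcases lt_trichotomy (2*p x+2*q x+1) (2*p y+2*q y+1) with hc2 | hc2 | hc2
        · exact (hom (u (2*p x)) (u (2*p y)) (u (2*p x+2*q x+1)) (u (2*p y+2*q y+1))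
            (humem _) (humem _) (humem _) (humem _)
            (hum hij) (hum hc) (hum hc2)).2.1.trans d20
        · rw [← hc2]
          exact ((hom (u (2*p x)) (u (2*p y)) (u (2*p x+2*q x+1)) (u (2*p x+2*q x+2))
            (humem _) (humem _) (humem _) (humem _)
            (hum hij) (hum hc) (hum (by omega))).2.2.2.2).trans d50
        · exact (hom (u (2*p x)) (u (2*p y)) (u (2*p y+2*q y+1)) (u (2*p x+2*q x+1))
            (humem _) (humem _) (humem _) (humem _)
            (hum hij) (hum (by omega)) (hum hc2)).2.2.1.trans d30
    · have hij : 2*p x+2*q x+1 < 2*p y+2*q y+1 := hum.lt_iff_lt.mp h'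
      rw [show u (2*p y) = u (2*p x) from h.symm]
      exact ((hom (u (2*p x)) (u (2*p x+2*q x+1)) (u (2*p y+2*q y+1)) (u (2*p y+2*q y+2))
        (humem _) (humem _) (humem _) (humem _)
        (hum (by omega)) (hum hij) (hum (by omega))).2.2.2.1).trans d40
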